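/- For Grether's α–β rule on a binary state space, the transformed two-step distortion is D_q^{II}(r) = p^{α(α-β)} q^{(α-1)β} r^β / (p^{α(α-β)} q^{(α-1)β} r^β + (1-p)^{α(α-β)} (1-q)^{(α-1)β} (1-r)^β), where all beliefs denote the probability of state 1. -/

import Mathlib

/-- Grether distortion on a binary state space (belief = probability of state 1). -/
noncomputable def gretherD (α β p x : ℝ) : ℝ :=
  p ^ (α - β) * x ^ β / (p ^ (α - β) * x ^ β + (1 - p) ^ (α - β) * (1 - x) ^ β)

/-- For Grether's α–β rule on a binary state space, the transformed
two-step distortion is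
`D_q^{II}(r) = p^{α(α-β)} q^{(α-1)β} r^β /
  (p^{α(α-β)} q^{(α-1)β} r^β + (1-p)^{α(α-β)} (1-q)^{(α-1)β} (1-r)^β)`. -/
theorem grether_two_step_distortion (α β p q r : ℝ) (hα : 0 < α) (hβ : 0 < β)
    (hp : 0 < p) (hp1 : p < 1) (hq : 0 < q) (hq1 : q < 1) (hr : 0 < r) (hr1 : r < 1) :
    let d : ℝ := gretherD α β p q
    let r' : ℝ := r * (d / q) / (r * (d / q) + (1 - r) * ((1 - d) / (1 - q)))
    gretherD α β d r'
      = p ^ (α * (α - β)) * q ^ ((α - 1) * β) * r ^ β /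
        (p ^ (α * (α - β)) * q ^ ((α - 1) * β) * r ^ β +
          (1 - p) ^ (α * (α - β)) * (1 - q) ^ ((α - 1) * β) * (1 - r) ^ β) := by
  intro d r'
  have hp1' : 0 < 1 - p := by linarith
  have hq1' : 0 < 1 - q := by linarith
  have hr1' : 0 < 1 - r := by linarith
  set A := p ^ (α - β) * q ^ β with hA_def
  set B := (1 - p) ^ (α - β) * (1 - q) ^ β with hB_def
  have hA : 0 < A := by positivity
  have hB : 0 < B := by positivity
  have hS : 0 < A + B := by linarith
  have hd : d = A / (A + B) := rfl
  have hd1 : 1 - d = B / (A + B) := by rw [hd]; field_simp; ring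
  set N := r * A * (1 - q) with hN_def
  set M := (1 - r) * B * q with hM_def
  have hN : 0 < N := by positivity
  have hM : 0 < M := by positivity
  have hT : 0 < N + M := by linarith
  have h1 : r * (d / q) = N / (q * (1 - q) * (A + B)) := by
    rw [hd, hN_def]; field_simp
  have h2 : (1 - r) * ((1 - d) / (1 - q)) = M / (q * (1 - q) * (A + B)) := by
    rw [hd1, hM_def]; field_simp
  have hc : 0 < q * (1 - q) * (A + B) := by positivity
  have hr' : r' = N / (N + M) := by
    show r * (d / q) / (r * (d / q) + (1 - r) * ((1 - d) / (1 - q))) = _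
    rw [h1, h2, ← add_div]
    field_simp
  have hr'1 : 1 - r' = M / (N + M) := by rw [hr']; field_simp; ring
  have hgoal : gretherD α β d r'
      = (A ^ (α - β) * N ^ β) / (A ^ (α - β) * N ^ β + B ^ (α - β) * M ^ β) := by
    unfold gretherD
    rw [hr'1, hd1, hr', hd, Real.div_rpow hA.le hS.le, Real.div_rpow hB.le hS.le,
      Real.div_rpow hN.le hT.le, Real.div_rpow hM.le hT.le]
    have hSp : 0 < (A + B) ^ (α - β) := Real.rpow_pos_of_pos hS _
    have hTp : 0 < (N + M) ^ β := Real.rpow_pos_of_pos hT _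
    have hAp : 0 < A ^ (α - β) := Real.rpow_pos_of_pos hA _
    have hBp : 0 < B ^ (α - β) := Real.rpow_pos_of_pos hB _
    have hNp : 0 < N ^ β := Real.rpow_pos_of_pos hN _
    have hMp : 0 < M ^ β := Real.rpow_pos_of_pos hM _
    have hden : 0 < A ^ (α - β) * N ^ β + B ^ (α - β) * M ^ β := by positivity
    field_simp
  have e1 : A ^ (α - β) * N ^ β
      = (p ^ (α * (α - β)) * q ^ ((α - 1) * β) * r ^ β) * (q ^ β * (1 - q) ^ β) := by
    rw [hN_def, Real.mul_rpow (by positivity) hq1'.le, Real.mul_rpow hr.le hA.le]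
    have hAab : A ^ (α - β) * A ^ β = A ^ α := by
      rw [← Real.rpow_add hA]; ring_nf
    have hAalpha : A ^ α = p ^ (α * (α - β)) * (q ^ ((α - 1) * β) * q ^ β) := by
      rw [hA_def, Real.mul_rpow (by positivity) (by positivity),
        ← Real.rpow_mul hp.le, ← Real.rpow_mul hq.le,
        show (α - β) * α = α * (α - β) from by ring,
        show β * α = (α - 1) * β + β from by ring,
        Real.rpow_add hq]
    calc A ^ (α - β) * (r ^ β * A ^ β * (1 - q) ^ β)
        = (A ^ (α - β) * A ^ β) * (r ^ β * (1 - q) ^ β) := by ring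
      _ = A ^ α * (r ^ β * (1 - q) ^ β) := by rw [hAab]
      _ = _ := by rw [hAalpha]; ring
  have e2 : B ^ (α - β) * M ^ β
      = ((1 - p) ^ (α * (α - β)) * (1 - q) ^ ((α - 1) * β) * (1 - r) ^ β)
          * (q ^ β * (1 - q) ^ β) := by
    rw [hM_def, Real.mul_rpow (by positivity) hq.le, Real.mul_rpow hr1'.le hB.le]
    have hBab : B ^ (α - β) * B ^ β = B ^ α := by
      rw [← Real.rpow_add hB]; ring_nf
    have hBalpha : B ^ α = (1 - p) ^ (α * (α - β)) * ((1 - q) ^ ((α - 1) * β) * (1 - q) ^ β) := by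
      rw [hB_def, Real.mul_rpow (by positivity) (by positivity),
        ← Real.rpow_mul hp1'.le, ← Real.rpow_mul hq1'.le,
        show (α - β) * α = α * (α - β) from by ring,
        show β * α = (α - 1) * β + β from by ring,
        Real.rpow_add hq1']
    calc B ^ (α - β) * ((1 - r) ^ β * B ^ β * q ^ β)
        = (B ^ (α - β) * B ^ β) * ((1 - r) ^ β * q ^ β) := by ring
      _ = B ^ α * ((1 - r) ^ β * q ^ β) := by rw [hBab]
      _ = _ := by rw [hBalpha]; ring
  rw [hgoal, e1, e2]
  have hc2 : 0 < q ^ β * (1 - q) ^ β := by positivity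
  rw [← add_mul, mul_div_mul_right _ _ hc2.ne']
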